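/- A game m is supermodular if and only if for every set S ⊆ N, m(S) equals the minimum over all enumerations τ of N of Σ_{i∈S} x^m(τ,i). -/

import Mathlib

open Finset

/-- A game is supermodular if `m A + m B ≤ m (A ∪ B) + m (A ∩ B)` for all `A, B`. -/
def Supermod {N : Type*} [DecidableEq N] (m : Finset N → ℝ) : Prop :=
  ∀ A B : Finset N, m A + m B ≤ m (A ∪ B) + m (A ∩ B)

/-- The initial segment `{π 0, ..., π (k-1)}` of the enumeration `π`. -/
def seg {N : Type*} [Fintype N] [DecidableEq N] (π : Fin (Fintype.card N) ≃ N) (k : ℕ) :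
    Finset N :=
  (Finset.univ.filter (fun j : Fin (Fintype.card N) => (j : ℕ) < k)).image π

/-- The marginal vector `x^m(π,·)` of the game `m` w.r.t. the enumeration `π`. -/
def marg {N : Type*} [Fintype N] [DecidableEq N] (m : Finset N → ℝ)
    (π : Fin (Fintype.card N) ≃ N) (i : N) : ℝ :=
  m (seg π ((π.symm i : ℕ) + 1)) - m (seg π ((π.symm i : ℕ)))

section Aux

variable {N : Type*} [Fintype N] [DecidableEq N]

lemma mem_seg {π : Fin (Fintype.card N) ≃ N} {k : ℕ} {i : N} :
    i ∈ seg π k ↔ (π.symm i : ℕ) < k := by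
  simp only [seg, Finset.mem_image, Finset.mem_filter, Finset.mem_univ, true_and]
  constructor
  · rintro ⟨j, hj, rfl⟩; simpa using hj
  · intro h; exact ⟨π.symm i, h, π.apply_symm_apply i⟩

lemma seg_zero (π : Fin (Fintype.card N) ≃ N) : seg π 0 = ∅ := by
  ext i; simp [mem_seg]

lemma seg_card (π : Fin (Fintype.card N) ≃ N) : seg π (Fintype.card N) = Finset.univ := by
  ext i; simp [mem_seg, (π.symm i).isLt]

lemma not_mem_seg (π : Fin (Fintype.card N) ≃ N) {k : ℕ} (hk : k < Fintype.card N) :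
    π ⟨k, hk⟩ ∉ seg π k := by
  simp [mem_seg]

lemma seg_succ (π : Fin (Fintype.card N) ≃ N) {k : ℕ} (hk : k < Fintype.card N) :
    seg π (k + 1) = insert (π ⟨k, hk⟩) (seg π k) := by
  ext i
  rw [Finset.mem_insert, mem_seg, mem_seg, Nat.lt_succ_iff_lt_or_eq]
  have h2 : i = π ⟨k, hk⟩ ↔ ((π.symm i : ℕ) = k) := by
    rw [← Equiv.symm_apply_eq, Fin.ext_iff]
  tauto

lemma marg_apply (m : Finset N → ℝ) (π : Fin (Fintype.card N) ≃ N) {k : ℕ}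
    (hk : k < Fintype.card N) :
    marg m π (π ⟨k, hk⟩) = m (seg π (k + 1)) - m (seg π k) := by
  simp [marg, Equiv.symm_apply_apply]

lemma sum_marg_seg (m : Finset N → ℝ) (hm : m ∅ = 0) (π : Fin (Fintype.card N) ≃ N) :
    ∀ k, k ≤ Fintype.card N → ∑ i ∈ seg π k, marg m π i = m (seg π k)
  | 0, _ => by simp [seg_zero, hm]
  | (k + 1), h => by
    have hk : k < Fintype.card N := h
    have h1 := seg_succ π hk
    rw [h1, Finset.sum_insert (not_mem_seg π hk), ← h1,
      sum_marg_seg m hm π k hk.le, marg_apply m π hk]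
    ring

lemma lower_aux (m : Finset N → ℝ) (hsm : Supermod m) (hm : m ∅ = 0)
    (π : Fin (Fintype.card N) ≃ N) (S : Finset N) :
    ∀ k, k ≤ Fintype.card N → m (S ∩ seg π k) ≤ ∑ i ∈ S ∩ seg π k, marg m π i
  | 0, _ => by simp [seg_zero, hm]
  | (k + 1), h => by
    have hk : k < Fintype.card N := h
    have IH := lower_aux m hsm hm π S k hk.le
    have hna := not_mem_seg π hk
    by_cases haS : π ⟨k, hk⟩ ∈ S
    · have hins : S ∩ seg π (k + 1) = insert (π ⟨k, hk⟩) (S ∩ seg π k) := by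
        rw [seg_succ π hk, Finset.inter_insert_of_mem haS]
      have hnotmem : π ⟨k, hk⟩ ∉ S ∩ seg π k := fun hmem => hna (Finset.mem_inter.mp hmem).2
      have hU : insert (π ⟨k, hk⟩) (S ∩ seg π k) ∪ seg π k = seg π (k + 1) := by
        rw [Finset.insert_union, Finset.union_eq_right.mpr Finset.inter_subset_right,
          ← seg_succ π hk]
      have hI : insert (π ⟨k, hk⟩) (S ∩ seg π k) ∩ seg π k = S ∩ seg π k := by
        ext i
        simp only [Finset.mem_inter, Finset.mem_insert]
        constructor
        · rintro ⟨(rfl | ⟨h1, h2⟩), h3⟩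
          · exact absurd h3 hna
          · exact ⟨h1, h3⟩
        · tauto
      have hsm' := hsm (insert (π ⟨k, hk⟩) (S ∩ seg π k)) (seg π k)
      rw [hU, hI] at hsm'
      have hmarg := marg_apply m π hk
      rw [hins, Finset.sum_insert hnotmem]
      linarith
    · have heq : S ∩ seg π (k + 1) = S ∩ seg π k := by
        ext i
        rw [seg_succ π hk]
        simp only [Finset.mem_inter, Finset.mem_insert]
        constructor
        · rintro ⟨h1, (rfl | h2)⟩
          · exact absurd h1 haS
          · exact ⟨h1, h2⟩
        · tauto
      rw [heq]; exact IH

lemma seg_take (l : List N) (nd : l.Nodup) (hmem : ∀ x, x ∈ l)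
    (hc : Fintype.card N = l.length) (k : ℕ) :
    seg ((finCongr hc).trans (List.Nodup.getEquivOfForallMemList l nd hmem)) k
      = (l.take k).toFinset := by
  ext i
  rw [mem_seg]
  have hval : ((((finCongr hc).trans
      (List.Nodup.getEquivOfForallMemList l nd hmem)).symm i : Fin (Fintype.card N)) : ℕ)
      = l.idxOf i := rfl
  rw [hval, List.mem_toFinset, List.mem_take_iff_getElem]
  constructor
  · intro h
    have hl : l.idxOf i < l.length := List.idxOf_lt_length_iff.mpr (hmem i)
    exact ⟨l.idxOf i, lt_min h hl, List.getElem_idxOf hl⟩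
  · rintro ⟨j, hj, rfl⟩
    rw [List.Nodup.idxOf_getElem nd j (lt_of_lt_of_le hj (min_le_right _ _))]
    exact lt_of_lt_of_le hj (min_le_left _ _)

lemma exists_adapted (S1 S2 S3 : Finset N) (h12 : S1 ⊆ S2) (h23 : S2 ⊆ S3) :
    ∃ π : Fin (Fintype.card N) ≃ N,
      seg π S1.card = S1 ∧ seg π S2.card = S2 ∧ seg π S3.card = S3 := by
  classical
  set A := S1.toList with hA
  set B := (S2 \ S1).toList with hB
  set C := (S3 \ S2).toList with hC
  set D := ((Finset.univ : Finset N) \ S3).toList with hD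
  have memA : ∀ x, x ∈ A ↔ x ∈ S1 := fun x => Finset.mem_toList
  have memB : ∀ x, x ∈ B ↔ x ∈ S2 \ S1 := fun x => Finset.mem_toList
  have memC : ∀ x, x ∈ C ↔ x ∈ S3 \ S2 := fun x => Finset.mem_toList
  have memD : ∀ x, x ∈ D ↔ x ∈ (Finset.univ : Finset N) \ S3 := fun x => Finset.mem_toList
  set l := ((A ++ B) ++ C) ++ D with hl
  have ndAB : (A ++ B).Nodup := by
    refine (Finset.nodup_toList S1).append (Finset.nodup_toList _) ?_
    intro a ha hb
    rw [memA] at ha; rw [memB, Finset.mem_sdiff] at hb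
    exact hb.2 ha
  have ndABC : ((A ++ B) ++ C).Nodup := by
    refine ndAB.append (Finset.nodup_toList _) ?_
    intro a ha hb
    rw [memC, Finset.mem_sdiff] at hb
    rcases List.mem_append.mp ha with h | h
    · exact hb.2 (h12 ((memA a).mp h))
    · exact hb.2 (Finset.mem_sdiff.mp ((memB a).mp h)).1
  have nd : l.Nodup := by
    refine ndABC.append (Finset.nodup_toList _) ?_
    intro a ha hb
    rw [memD, Finset.mem_sdiff] at hb
    rcases List.mem_append.mp ha with h | h
    · rcases List.mem_append.mp h with h' | h'
      · exact hb.2 (h23 (h12 ((memA a).mp h')))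
      · exact hb.2 (h23 (Finset.mem_sdiff.mp ((memB a).mp h')).1)
    · exact hb.2 (Finset.mem_sdiff.mp ((memC a).mp h)).1
  have hmem : ∀ x, x ∈ l := by
    intro x
    simp only [hl, List.mem_append, memA, memB, memC, memD, Finset.mem_sdiff, Finset.mem_univ,
      true_and]
    by_cases h1 : x ∈ S1
    · tauto
    by_cases h2 : x ∈ S2
    · tauto
    by_cases h3 : x ∈ S3 <;> tauto
  have hc : Fintype.card N = l.length := by
    have := Finset.card_univ (α := N)
    have hlen : l.length = S1.card + (S2 \ S1).card + (S3 \ S2).card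
        + ((Finset.univ : Finset N) \ S3).card := by
      simp [hl, hA, hB, hC, hD, Finset.length_toList]
      ring
    have c12 := Finset.card_le_card h12
    have c23 := Finset.card_le_card h23
    have c3u := Finset.card_le_card (Finset.subset_univ S3)
    rw [hlen, Finset.card_sdiff_of_subset h12, Finset.card_sdiff_of_subset h23,
      Finset.card_sdiff_of_subset (Finset.subset_univ S3), Finset.card_univ]
    omega
  refine ⟨(finCongr hc).trans (List.Nodup.getEquivOfForallMemList l nd hmem), ?_, ?_, ?_⟩
  · rw [seg_take l nd hmem hc]
    have h1 : l.take S1.card = A := by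
      rw [hl, List.take_append_of_le_length, List.take_append_of_le_length,
        List.take_left' (Finset.length_toList S1)]
      · rw [List.length_append, Finset.length_toList]; omega
      · rw [List.length_append, List.length_append, Finset.length_toList]; omega
    rw [h1, hA, Finset.toList_toFinset]
  · rw [seg_take l nd hmem hc]
    have hlen2 : (A ++ B).length = S2.card := by
      rw [List.length_append, hA, hB, Finset.length_toList, Finset.length_toList,
        Finset.card_sdiff_of_subset h12]
      have := Finset.card_le_card h12
      omega
    have h2 : l.take S2.card = A ++ B := by
      rw [hl, List.take_append_of_le_length, List.take_left' hlen2]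
      rw [List.length_append, hlen2]; omega
    rw [h2, List.toFinset_append, hA, hB, Finset.toList_toFinset, Finset.toList_toFinset,
      Finset.union_sdiff_of_subset h12]
  · rw [seg_take l nd hmem hc]
    have hlen3 : ((A ++ B) ++ C).length = S3.card := by
      rw [List.length_append, List.length_append, hA, hB, hC, Finset.length_toList,
        Finset.length_toList, Finset.length_toList, Finset.card_sdiff_of_subset h12,
        Finset.card_sdiff_of_subset h23]
      have := Finset.card_le_card h12
      have := Finset.card_le_card h23
      omega
    have h3 : l.take S3.card = (A ++ B) ++ C := by
      rw [hl, List.take_left' hlen3]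
    rw [h3, List.toFinset_append, List.toFinset_append, hA, hB, hC, Finset.toList_toFinset,
      Finset.toList_toFinset, Finset.toList_toFinset, Finset.union_sdiff_of_subset h12,
      Finset.union_sdiff_of_subset h23]

end Aux

/-- `m` is supermodular iff `m S` is the minimum over all enumerations `τ` of
`∑_{i ∈ S} x^m(τ,i)`. -/
theorem stmt5 {N : Type*} [Fintype N] [DecidableEq N] [Nonempty N]
    (m : Finset N → ℝ) (hm : m ∅ = 0) :
    Supermod m ↔
      ∀ S : Finset N,
        IsLeast {r : ℝ | ∃ τ : Fin (Fintype.card N) ≃ N, r = ∑ i ∈ S, marg m τ i} (m S) := by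
  constructor
  · intro hsm S
    constructor
    · obtain ⟨π, hπ1, -, -⟩ := exists_adapted S S S (subset_refl S) (subset_refl S)
      refine ⟨π, ?_⟩
      rw [← hπ1, sum_marg_seg m hm π S.card (Finset.card_le_univ S)]
    · rintro r ⟨τ, rfl⟩
      have := lower_aux m hsm hm τ S (Fintype.card N) le_rfl
      rwa [seg_card, Finset.inter_univ] at this
  · intro h A B
    obtain ⟨π, hπ1, hπ2, hπ3⟩ := exists_adapted (A ∩ B) B (A ∪ B)
      Finset.inter_subset_right Finset.subset_union_right
    have hAB : ∑ i ∈ A ∩ B, marg m π i = m (A ∩ B) := by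
      rw [← hπ1] at *
      exact sum_marg_seg m hm π (A ∩ B).card (Finset.card_le_univ _)
    have hB : ∑ i ∈ B, marg m π i = m B := by
      rw [← hπ2] at *
      exact sum_marg_seg m hm π B.card (Finset.card_le_univ _)
    have hU : ∑ i ∈ A ∪ B, marg m π i = m (A ∪ B) := by
      rw [← hπ3] at *
      exact sum_marg_seg m hm π (A ∪ B).card (Finset.card_le_univ _)
    have hsplitB : ∑ i ∈ B ∩ A, marg m π i + ∑ i ∈ B \ A, marg m π i
        = ∑ i ∈ B, marg m π i := Finset.sum_inter_add_sum_sdiff B A _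
    have hsplitU : ∑ i ∈ A ∪ B, marg m π i
        = ∑ i ∈ A, marg m π i + ∑ i ∈ B \ A, marg m π i := by
      rw [← Finset.sum_union Finset.disjoint_sdiff, Finset.union_sdiff_self_eq_union]
    have hlow : m A ≤ ∑ i ∈ A, marg m π i := (h A).2 ⟨π, rfl⟩
    rw [Finset.inter_comm B A] at hsplitB
    linarith
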